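/- Let E and F be finite abelian groups with |E| = p₁^{α₁} ⋯ p_k^{α_k} and |F| = p₁^{β₁} ⋯ p_k^{β_k}, where p₁, …, p_k are distinct primes and the exponents αᵢ, βᵢ are nonnegative integers. Then the number of group homomorphisms from F to E divides p₁^{α₁β₁} ⋯ p_k^{α_kβ_k}. -/

import Mathlib

-- helper: factorization of ∏ pⱼ^γⱼ at p i is γ i
lemma prod_pow_fact {k : ℕ} (p : Fin k → ℕ) (γ : Fin k → ℕ)
    (hp : ∀ i, (p i).Prime) (hpinj : Function.Injective p) (i : Fin k) :
    (∏ j, p j ^ γ j).factorization (p i) = γ i := by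
  rw [Nat.factorization_prod (fun j _ => pow_ne_zero _ (hp j).pos.ne')]
  rw [Finset.sum_apply']
  rw [Finset.sum_eq_single i]
  · rw [(hp i).factorization_pow, Finsupp.single_eq_same]
  · intro j _ hj
    rw [(hp j).factorization_pow, Finsupp.single_eq_of_ne' (fun h => hj (hpinj h))]
  · simp

-- torsion lemma
lemma pow_pow_eq_one {G : Type*} [Group G] [Finite G] {q : ℕ} (hq : q.Prime)
    {x : G} {n : ℕ} (h : x ^ q ^ n = 1) :
    x ^ q ^ ((Nat.card G).factorization q) = 1 := by
  have h1 : orderOf x ∣ q ^ n := orderOf_dvd_of_pow_eq_one h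
  obtain ⟨m, hm, hord⟩ := (Nat.dvd_prime_pow hq).mp h1
  rw [← orderOf_dvd_iff_pow_eq_one, hord]
  refine pow_dvd_pow q ?_
  have h2 : q ^ m ∣ Nat.card G := hord ▸ orderOf_dvd_natCard x
  exact (Nat.Prime.pow_dvd_iff_le_factorization hq Nat.card_pos.ne').mp h2


lemma homCardAux {q : ℕ} (hq : q.Prime) :
    ∀ (b : ℕ) (G : Type*) [CommGroup G] [Finite G] (A : Type*) [CommGroup A] [Finite A],
      Nat.card G ∣ q ^ b → Nat.card (G →* A) ∣ Nat.card A ^ b := by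
  intro b
  induction b with
  | zero =>
    intro G _ _ A _ _ hG
    rw [pow_zero] at hG
    have hG1 : Nat.card G = 1 := Nat.dvd_one.mp hG
    haveI : Subsingleton G := (Nat.card_eq_one_iff_unique.mp hG1).1
    have : Subsingleton (G →* A) :=
      ⟨fun f g => MonoidHom.ext fun x => by rw [Subsingleton.elim x 1, map_one, map_one]⟩
    rw [Nat.card_eq_one_iff_unique.mpr ⟨this, ⟨1⟩⟩, pow_zero]
  | succ b ih =>
    intro G _ _ A _ _ hG
    rcases subsingleton_or_nontrivial G with hS | hN
    · have : Subsingleton (G →* A) :=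
        ⟨fun f g => MonoidHom.ext fun x => by rw [Subsingleton.elim x 1, map_one, map_one]⟩
      rw [Nat.card_eq_one_iff_unique.mpr ⟨this, ⟨1⟩⟩]
      exact one_dvd _
    · obtain ⟨g, hg⟩ := exists_ne (1 : G)
      set N := Subgroup.zpowers g with hNdef
      have hordg : orderOf g ∣ q ^ (b + 1) := (orderOf_dvd_natCard g).trans hG
      obtain ⟨v, hv, hvord⟩ := (Nat.dvd_prime_pow hq).mp hordg
      have hv1 : 1 ≤ v := by
        rcases Nat.eq_zero_or_pos v with h0 | h; swap; · exact h
        exfalso; apply hg; rw [← orderOf_eq_one_iff, hvord, h0, pow_zero]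
      have hqN : q ∣ Nat.card N := by
        rw [Nat.card_zpowers, hvord]
        exact dvd_pow_self q (by omega)
      have h1 : Nat.card (G ⧸ N) * Nat.card N = Nat.card G :=
        (Subgroup.card_eq_card_quotient_mul_card_subgroup N).symm
      have hGq : Nat.card (G ⧸ N) ∣ q ^ b := by
        have h2 : Nat.card (G ⧸ N) * q ∣ q ^ b * q := by
          rw [← pow_succ]
          calc Nat.card (G ⧸ N) * q ∣ Nat.card (G ⧸ N) * Nat.card N :=
                mul_dvd_mul_left _ hqN
            _ = Nat.card G := h1
            _ ∣ q ^ (b + 1) := hG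
        exact (Nat.mul_dvd_mul_iff_right hq.pos).mp h2
      let ev : (G →* A) →* A :=
        { toFun := fun f => f g, map_one' := rfl, map_mul' := fun f h => rfl }
      have hker_lift : ∀ f : ev.ker, ∀ x ∈ N, (f : G →* A) x = 1 := by
        rintro ⟨f, hf⟩ x hx
        obtain ⟨n, rfl⟩ := Subgroup.mem_zpowers_iff.mp hx
        rw [map_zpow, show f g = 1 from hf, one_zpow]
      let kerEquiv : ev.ker ≃ (G ⧸ N →* A) :=
        { toFun := fun f => QuotientGroup.lift N (f : G →* A) (hker_lift f)
          invFun := fun φ => ⟨φ.comp (QuotientGroup.mk' N), by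
            rw [MonoidHom.mem_ker]
            show φ ((QuotientGroup.mk' N) g) = 1
            rw [show ((QuotientGroup.mk' N) g) = 1 from
              (QuotientGroup.eq_one_iff g).mpr (Subgroup.mem_zpowers g), map_one]⟩
          left_inv := fun f => by apply Subtype.ext; ext x; rfl
          right_inv := fun φ => MonoidHom.ext fun x => QuotientGroup.induction_on x fun z => rfl }
      have hsplit : Nat.card (G →* A) = Nat.card (G ⧸ N →* A) * Nat.card ev.range := by
        have e1 : Nat.card (G →* A) = Nat.card ((G →* A) ⧸ ev.ker) * Nat.card ev.ker :=
          Subgroup.card_eq_card_quotient_mul_card_subgroup ev.ker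
        have e2 : Nat.card ((G →* A) ⧸ ev.ker) = Nat.card ev.range :=
          Nat.card_congr (QuotientGroup.quotientKerEquivRange ev).toEquiv
        have e3 : Nat.card ev.ker = Nat.card (G ⧸ N →* A) := Nat.card_congr kerEquiv
        rw [e1, e2, e3, mul_comm]
      rw [hsplit, pow_succ]
      exact mul_dvd_mul (ih (G ⧸ N) A hGq) ev.range.card_subgroup_dvd_card


/-- For finite abelian groups `E`, `F` with `|E| = ∏ pᵢ^{αᵢ}` and
`|F| = ∏ pᵢ^{βᵢ}` (distinct primes `pᵢ`, nonnegative exponents), the number of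
group homomorphisms `F → E` divides `∏ pᵢ^{αᵢβᵢ}`. -/
theorem stmt_7
    (E : Type*) [CommGroup E] [Fintype E]
    (F : Type*) [CommGroup F] [Fintype F]
    (k : ℕ) (p : Fin k → ℕ) (α β : Fin k → ℕ)
    (hp : ∀ i, (p i).Prime) (hpinj : Function.Injective p)
    (hE : Fintype.card E = ∏ i, p i ^ α i)
    (hF : Fintype.card F = ∏ i, p i ^ β i) :
    Nat.card (F →* E) ∣ ∏ i, p i ^ (α i * β i) := by
  haveI : Finite (F →* E) :=
    Finite.of_injective (fun f : F →* E => (f : F → E)) DFunLike.coe_injective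
  have hN0 : Nat.card (F →* E) ≠ 0 := Nat.card_pos.ne'
  have hR0 : (∏ i, p i ^ (α i * β i)) ≠ 0 :=
    Finset.prod_ne_zero_iff.mpr fun i _ => pow_ne_zero _ (hp i).pos.ne'
  rw [← Nat.factorization_le_iff_dvd hN0 hR0]
  intro ℓ
  by_cases hℓ : ℓ.Prime; swap
  · rw [Nat.factorization_eq_zero_of_not_prime _ hℓ]; exact Nat.zero_le _
  by_cases hdvd : ℓ ∣ Nat.card (F →* E); swap
  · rw [Nat.factorization_eq_zero_of_not_dvd hdvd]; exact Nat.zero_le _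
  -- find i with ℓ = p i
  haveI : Fintype (F →* E) := Fintype.ofFinite _
  haveI : Fact ℓ.Prime := ⟨hℓ⟩
  obtain ⟨f, hford⟩ := exists_prime_orderOf_dvd_card (G := F →* E) ℓ
      (by rwa [← Nat.card_eq_fintype_card])
  have hf1 : f ≠ 1 := by
    intro h; rw [h, orderOf_one] at hford; exact hℓ.one_lt.ne hford
  obtain ⟨x, hx⟩ : ∃ x : F, f x ≠ 1 := by
    by_contra h
    push_neg at h
    exact hf1 (MonoidHom.ext fun x => h x)
  have hfxℓ : (f x) ^ ℓ = 1 := by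
    have h1 : f ^ ℓ = 1 := by rw [← hford]; exact pow_orderOf_eq_one f
    calc (f x) ^ ℓ = (f ^ ℓ) x := rfl
      _ = 1 := by rw [h1]; rfl
  have hordfx : orderOf (f x) = ℓ := by
    rcases (Nat.dvd_prime hℓ).mp (orderOf_dvd_of_pow_eq_one hfxℓ) with h | h
    · exact absurd (orderOf_eq_one_iff.mp h) hx
    · exact h
  have hℓE : ℓ ∣ ∏ i, p i ^ α i := by
    rw [← hE]; rw [← hordfx]; exact orderOf_dvd_card
  obtain ⟨i, _, hℓpi⟩ := (hℓ.prime.dvd_finset_prod_iff _).mp hℓE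
  have hℓeq : ℓ = p i :=
    (Nat.prime_dvd_prime_iff_eq hℓ (hp i)).mp (hℓ.dvd_of_dvd_pow hℓpi)
  subst hℓeq
  haveI : Fact (p i).Prime := ⟨hp i⟩
  -- RHS factorization
  rw [prod_pow_fact p _ hp hpinj i]
  -- key facts
  have hcardE : Nat.card E = ∏ j, p j ^ α j := by rw [Nat.card_eq_fintype_card, hE]
  have hcardF : Nat.card F = ∏ j, p j ^ β j := by rw [Nat.card_eq_fintype_card, hF]
  have hEfact : (Nat.card E).factorization (p i) = α i := by
    rw [hcardE]; exact prod_pow_fact p _ hp hpinj i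
  have hFfact : (Nat.card F).factorization (p i) = β i := by
    rw [hcardF]; exact prod_pow_fact p _ hp hpinj i
  set S : Subgroup F := (powMonoidHom (p i ^ β i) : F →* F).ker with hSdef
  set T : Subgroup E := (powMonoidHom (p i ^ α i) : E →* E).ker with hTdef
  have hmemS : ∀ y : F, y ∈ S ↔ y ^ (p i ^ β i) = 1 := fun y => Iff.rfl
  have hmemT : ∀ y : E, y ∈ T ↔ y ^ (p i ^ α i) = 1 := fun y => Iff.rfl
  have hcardS : Nat.card S ∣ p i ^ β i := by
    have hpg : IsPGroup (p i) S := fun s =>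
      ⟨β i, Subtype.ext (by
        rw [SubmonoidClass.coe_pow, OneMemClass.coe_one]
        exact (hmemS s).mp s.2)⟩
    obtain ⟨n, hn⟩ := IsPGroup.iff_card.mp hpg
    have h2 : p i ^ n ∣ Nat.card F := hn ▸ S.card_subgroup_dvd_card
    have h3 : n ≤ β i := by
      have := (Nat.Prime.pow_dvd_iff_le_factorization (hp i) Nat.card_pos.ne').mp h2
      rwa [hFfact] at this
    rw [hn]; exact pow_dvd_pow _ h3
  have hcardT : Nat.card T ∣ p i ^ α i := by
    have hpg : IsPGroup (p i) T := fun s =>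
      ⟨α i, Subtype.ext (by
        rw [SubmonoidClass.coe_pow, OneMemClass.coe_one]
        exact (hmemT s).mp s.2)⟩
    obtain ⟨n, hn⟩ := IsPGroup.iff_card.mp hpg
    have h2 : p i ^ n ∣ Nat.card E := hn ▸ T.card_subgroup_dvd_card
    have h3 : n ≤ α i := by
      have := (Nat.Prime.pow_dvd_iff_le_factorization (hp i) Nat.card_pos.ne').mp h2
      rwa [hEfact] at this
    rw [hn]; exact pow_dvd_pow _ h3
  -- Sylow subgroup of Hom
  obtain Q : Sylow (p i) (F →* E) := default
  have hcardQ : Nat.card Q = p i ^ (Nat.card (F →* E)).factorization (p i) :=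
    Q.card_eq_multiplicity
  -- image of Q in E is (p i)-torsion
  have htorE : ∀ f : (Q : Subgroup (F →* E)), ∀ s : F,
      ((f : F →* E) s) ^ (p i ^ α i) = 1 := by
    intro f s
    obtain ⟨n, hfn⟩ := Q.isPGroup' f
    have hcoe : ((f : F →* E) ^ (p i ^ n)) = 1 := by
      have := congrArg (fun y : (Q : Subgroup (F →* E)) => (y : F →* E)) hfn
      simpa using this
    have h1 : ((f : F →* E) s) ^ (p i ^ n) = 1 := by
      calc ((f : F →* E) s) ^ (p i ^ n) = ((f : F →* E) ^ (p i ^ n)) s := rfl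
        _ = 1 := by rw [hcoe]; rfl
    have h2 := pow_pow_eq_one (hp i) h1
    rwa [hEfact] at h2
  -- the restriction map
  let Φ : ↥(Q : Subgroup (F →* E)) → (S →* T) := fun f =>
    { toFun := fun s => ⟨(f : F →* E) s, (hmemT _).mpr (htorE f s)⟩
      map_one' := Subtype.ext (by simp)
      map_mul' := fun a b => Subtype.ext (by simp) }
  have hΦinj : Function.Injective Φ := by
    intro f g hfg
    have hagree : ∀ s : F, s ∈ S → (f : F →* E) s = (g : F →* E) s := by
      intro s hs
      have := congrArg (fun ψ : S →* T => ((ψ ⟨s, hs⟩ : T) : E)) hfg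
      simpa [Φ] using this
    set u : F →* E := (f : F →* E) * ((g : F →* E))⁻¹ with hudef
    have huS : ∀ s : F, s ∈ S → u s = 1 := by
      intro s hs
      rw [hudef]
      rw [MonoidHom.mul_apply, MonoidHom.inv_apply, hagree s hs, mul_inv_cancel]
    obtain ⟨n, hn⟩ := Q.isPGroup' (f * g⁻¹)
    have hun : u ^ (p i ^ n) = 1 := by
      have := congrArg (fun y : (Q : Subgroup (F →* E)) => (y : F →* E)) hn
      simpa using this
    have hu1 : u = 1 := by
      ext y
      set c := (orderOf y).factorization (p i) with hc
      have hyord : orderOf y ≠ 0 := (orderOf_pos y).ne'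
      set P := p i ^ c with hP
      have hfac : P * (orderOf y / P) = orderOf y := Nat.ordProj_mul_ordCompl_eq_self _ _
      set m := orderOf y / P with hm
      have hcopm : Nat.Coprime (p i) m := Nat.coprime_ordCompl (hp i) hyord
      have hcop : Nat.Coprime P m := hcopm.pow_left _
      set A' := Nat.gcdA P m with hA'
      set B' := Nat.gcdB P m with hB'
      have hbez : (1 : ℤ) = (P : ℤ) * A' + (m : ℤ) * B' := by
        have h5 := Nat.gcd_eq_gcd_ab P m
        rw [Nat.Coprime.gcd_eq_one hcop] at h5
        exact_mod_cast h5
      have hy1 : y = y ^ ((P : ℤ) * A') * y ^ ((m : ℤ) * B') := by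
        rw [← zpow_add, ← hbez, zpow_one]
      have huyc : (u y) ^ P = 1 := by
        have hd1 : orderOf (u y) ∣ p i ^ n := by
          apply orderOf_dvd_of_pow_eq_one
          calc (u y) ^ (p i ^ n) = (u ^ (p i ^ n)) y := rfl
            _ = 1 := by rw [hun]; rfl
        have hd2 : orderOf (u y) ∣ orderOf y := by
          apply orderOf_dvd_of_pow_eq_one
          rw [← map_pow, pow_orderOf_eq_one, map_one]
        obtain ⟨d, hdle, hdeq⟩ := (Nat.dvd_prime_pow (hp i)).mp hd1
        rw [← orderOf_dvd_iff_pow_eq_one, hdeq, hP]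
        have h6 : p i ^ d ∣ P * m := by rw [hfac, ← hdeq]; exact hd2
        exact (hcopm.pow_left d).dvd_of_dvd_mul_right h6
      have hymS : y ^ m ∈ S := by
        rw [hmemS, ← pow_mul]
        apply orderOf_dvd_iff_pow_eq_one.mp
        rw [← hfac]
        have hcβ : c ≤ β i := by
          have h4 : (orderOf y).factorization (p i) ≤ (Nat.card F).factorization (p i) :=
            (Nat.factorization_le_iff_dvd hyord Nat.card_pos.ne').mpr
              (orderOf_dvd_natCard y) (p i)
          rw [hFfact] at h4; exact h4
        calc P * m ∣ p i ^ β i * m := mul_dvd_mul_right (pow_dvd_pow _ hcβ) m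
          _ = m * p i ^ β i := mul_comm _ _
      calc u y = u (y ^ ((P : ℤ) * A') * y ^ ((m : ℤ) * B')) := by rw [← hy1]
        _ = ((u y) ^ (P : ℤ)) ^ A' * ((u (y ^ m)) ^ B') := by
            simp only [map_mul, map_zpow, zpow_mul, zpow_natCast, map_pow]
        _ = 1 := by
            rw [zpow_natCast, huyc, one_zpow, huS _ hymS, one_zpow, one_mul]
    have : (f : F →* E) = (g : F →* E) := by
      have := mul_inv_eq_one.mp hu1
      exact this
    exact Subtype.ext this
  haveI : Finite (S →* T) :=
    Finite.of_injective (fun ψ : S →* T => (ψ : S → T)) DFunLike.coe_injective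
  have hle : Nat.card Q ≤ Nat.card (S →* T) := Nat.card_le_card_of_injective Φ hΦinj
  have hhom : Nat.card (S →* T) ∣ p i ^ (α i * β i) := by
    calc Nat.card (S →* T) ∣ Nat.card T ^ β i := homCardAux (hp i) (β i) S T hcardS
      _ ∣ (p i ^ α i) ^ β i := pow_dvd_pow_of_dvd hcardT _
      _ = p i ^ (α i * β i) := (pow_mul _ _ _).symm
  have hfin : p i ^ (Nat.card (F →* E)).factorization (p i) ≤ p i ^ (α i * β i) := by
    rw [← hcardQ]
    exact hle.trans (Nat.le_of_dvd (pow_pos (hp i).pos _) hhom)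
  exact (Nat.pow_le_pow_iff_right (hp i).one_lt).mp hfin
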